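/- Let r > 0, x > 0, c > 0 and α > 0. Let g : ℝ → ℝ be measurable, odd (g(−z) = −g(z) for all z), integrable on bounded intervals, and satisfy g(z) ≥ c·(1 + z)^{−α} for all z > 0. Then ∫_{−r}^{r} g(x − y) dy ≥ 2c·(1 + r + x)^{−α} · min{r, x}. -/

import Mathlib

open MeasureTheory Set

/-- Lemma 4.4: interaction energy decay rate of a point mass moving toward the
center of a symmetric interval. -/
theorem stmt_8 (r x c α : ℝ) (hr : 0 < r) (hx : 0 < x) (hc : 0 < c) (hα : 0 < α)
    (g : ℝ → ℝ) (hgm : Measurable g)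
    (hodd : ∀ z : ℝ, g (-z) = -g z)
    (hloc : ∀ a b : ℝ, IntervalIntegrable g volume a b)
    (hlow : ∀ z : ℝ, 0 < z → c * (1 + z) ^ (-α) ≤ g z) :
    2 * c * (1 + r + x) ^ (-α) * min r x ≤ ∫ y in (-r)..r, g (x - y) := by
  have hP : (0:ℝ) < (1 + r + x) ^ (-α) := Real.rpow_pos_of_pos (by linarith) _
  have key : ∀ a b : ℝ, 0 ≤ a → a ≤ b → b ≤ r + x →
      c * (1 + r + x) ^ (-α) * (b - a) ≤ ∫ z in a..b, g z := by
    intro a b ha hab hb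
    rw [intervalIntegral.integral_of_le hab]
    have h1 : ∫ _z in Ioc a b, (c * (1 + r + x) ^ (-α)) ≤ ∫ z in Ioc a b, g z := by
      apply setIntegral_mono_on
      · exact integrableOn_const (by simp)
      · exact (intervalIntegrable_iff_integrableOn_Ioc_of_le hab).1 (hloc a b)
      · exact measurableSet_Ioc
      · intro z hz
        have hz0 : 0 < z := lt_of_le_of_lt ha hz.1
        calc c * (1 + r + x) ^ (-α) ≤ c * (1 + z) ^ (-α) := by
              apply mul_le_mul_of_nonneg_left _ hc.le
              exact Real.rpow_le_rpow_of_nonpos (by linarith) (by linarith [hz.2]) (by linarith)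
          _ ≤ g z := hlow z hz0
    calc c * (1 + r + x) ^ (-α) * (b - a)
        = ∫ _z in Ioc a b, (c * (1 + r + x) ^ (-α)) := by
          rw [setIntegral_const, Real.volume_real_Ioc_of_le hab]
          rw [smul_eq_mul]; ring
      _ ≤ _ := h1
  have hzero : ∀ s : ℝ, ∫ z in (-s)..s, g z = 0 := by
    intro s
    have h := intervalIntegral.integral_comp_neg g (a := -s) (b := s)
    simp only [hodd, neg_neg, intervalIntegral.integral_neg] at h
    linarith
  rw [intervalIntegral.integral_comp_sub_left g x]
  have hxr : x - -r = x + r := by ring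
  rw [hxr]
  rcases le_total x r with hxr' | hxr'
  · have hmin : min r x = x := min_eq_right hxr'
    have hsplit : (∫ z in (x - r)..(r - x), g z) + (∫ z in (r - x)..(x + r), g z)
        = ∫ z in (x - r)..(x + r), g z :=
      intervalIntegral.integral_add_adjacent_intervals (hloc _ _) (hloc _ _)
    have h0 : (∫ z in (x - r)..(r - x), g z) = 0 := by
      have := hzero (r - x)
      rwa [show -(r - x) = x - r by ring] at this
    have h2 := key (r - x) (x + r) (by linarith) (by linarith) (by linarith)
    rw [hmin, ← hsplit, h0, zero_add]
    calc 2 * c * (1 + r + x) ^ (-α) * x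
        = c * (1 + r + x) ^ (-α) * (x + r - (r - x)) := by ring
      _ ≤ _ := h2
  · have hmin : min r x = r := min_eq_left hxr'
    have h2 := key (x - r) (x + r) (by linarith) (by linarith) (by linarith)
    rw [hmin]
    calc 2 * c * (1 + r + x) ^ (-α) * r
        = c * (1 + r + x) ^ (-α) * (x + r - (x - r)) := by ring
      _ ≤ _ := h2
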